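/- Define for $r \in [0, 1/2)$ the function $\mathcal{F}(r) = \frac{2\frac{r}{1-r}}{\left(1-\left(\frac{r}{1-r}\right)^2\right)^2}\left(\frac{r}{(1-r)^3} + \frac{r}{(1-r)^4}\right) + \frac{\left(\frac{r}{1-r}\right)^2}{1-2r} + \frac{2\left(\frac{r}{1-r}\right)^2}{1-\left(\frac{r}{1-r}\right)^2}\cdot\frac{1}{(1-r)^3} + \frac{r}{1-r} + \frac{r}{(1-r)^2}$. Then $\mathcal{F}$ is continuous on a neighborhood of $0$, $\mathcal{F}(0) = 0$, $\mathcal{F}$ is monotone increasing on $[0, 0.17]$, and $\mathcal{F}(r) < 1$ for all $r \in [0, 0.17]$. -/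
import Mathlib

open Real Filter Topology

/-- The explicit rational function `𝓕` arising in the smallness condition of Theorem 2. -/
noncomputable def Fcal (r : ℝ) : ℝ :=
  2 * (r / (1 - r)) / (1 - (r / (1 - r)) ^ 2) ^ 2 *
      (r / (1 - r) ^ 3 + r / (1 - r) ^ 4)
    + (r / (1 - r)) ^ 2 / (1 - 2 * r)
    + 2 * (r / (1 - r)) ^ 2 / (1 - (r / (1 - r)) ^ 2) * (1 / (1 - r) ^ 3)
    + r / (1 - r) + r / (1 - r) ^ 2

lemma Fcal_rw (r : ℝ) (h1 : (1 - r) ≠ 0) :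
    (1 - (r/(1-r))^2) = (1-2*r)/(1-r)^2 := by
  field_simp
  ring

lemma Fcal_eq_frac (r : ℝ) (h1 : (0:ℝ) < 1 - r) (h2 : (0:ℝ) < 1 - 2*r) :
    Fcal r = (2*r^2*(2-r)*(1-r)^2 + r^2*(1-r)*(1-2*r) + 2*r^2*(1-2*r)
      + r*(1-r)^2*(1-2*r)^2 + r*(1-r)*(1-2*r)^2) / ((1-r)^3*(1-2*r)^2) := by
  have h1' : (1 - r) ≠ 0 := ne_of_gt h1
  have h2' : (1 - 2*r) ≠ 0 := ne_of_gt h2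
  unfold Fcal
  rw [Fcal_rw r h1']
  field_simp
  ring

lemma Fcal_eq_sum (r : ℝ) (h1 : (0:ℝ) < 1 - r) (h2 : (0:ℝ) < 1 - 2*r) :
    Fcal r = 2*r^2*(2-r)/((1-r)*(1-2*r)^2) + r^2/((1-r)^2*(1-2*r))
      + 2*r^2/((1-r)^3*(1-2*r)) + r/(1-r) + r/(1-r)^2 := by
  have h1' : (1 - r) ≠ 0 := ne_of_gt h1
  have h2' : (1 - 2*r) ≠ 0 := ne_of_gt h2
  unfold Fcal
  rw [Fcal_rw r h1']
  field_simp
  ring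

/-- `𝓕` is continuous in a neighborhood of `0`, `𝓕(0) = 0`, `𝓕` is monotone increasing on
`[0, 0.17]` and `𝓕(r) < 1` for all `r ∈ [0, 0.17]`. -/
theorem Fcal_properties :
    (∃ U ∈ 𝓝 (0:ℝ), ContinuousOn Fcal U) ∧
    Fcal 0 = 0 ∧
    MonotoneOn Fcal (Set.Icc (0:ℝ) 0.17) ∧
    ∀ r ∈ Set.Icc (0:ℝ) 0.17, Fcal r < 1 := by
  have hmono : MonotoneOn Fcal (Set.Icc (0:ℝ) 0.17) := by
    intro a ha b hb hab
    obtain ⟨ha0, ha17⟩ := ha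
    obtain ⟨hb0, hb17⟩ := hb
    have ha17' : a ≤ 0.17 := ha17
    have hb17' : b ≤ 0.17 := hb17
    norm_num at ha17' hb17'
    have ha1 : (0:ℝ) < 1 - a := by linarith
    have ha2 : (0:ℝ) < 1 - 2*a := by linarith
    have hb1 : (0:ℝ) < 1 - b := by linarith
    have hb2 : (0:ℝ) < 1 - 2*b := by linarith
    have hd : (0:ℝ) ≤ b - a := by linarith
    rw [Fcal_eq_sum a ha1 ha2, Fcal_eq_sum b hb1 hb2]
    -- numerator monotonicity facts
    have haa : 0 ≤ a * (0.17 - a) := mul_nonneg ha0 (by linarith)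
    have hbb : 0 ≤ b * (0.17 - b) := mul_nonneg hb0 (by linarith)
    have hab' : 0 ≤ a * (0.17 - b) := mul_nonneg ha0 (by linarith)
    have hnum1 : 2*a^2*(2-a) ≤ 2*b^2*(2-b) := by
      have hfac : 0 ≤ 2*(a+b) - (a^2 + a*b + b^2) := by nlinarith [haa, hbb, hab']
      nlinarith [mul_nonneg hd hfac]
    have hnum2 : a^2 ≤ b^2 := by nlinarith [mul_nonneg hd hd]
    -- denominator antitonicity facts
    have hden1 : (1-b)*(1-2*b)^2 ≤ (1-a)*(1-2*a)^2 :=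
      mul_le_mul (by linarith) (pow_le_pow_left₀ hb2.le (by linarith) 2)
        (by positivity) (by linarith)
    have hden2 : (1-b)^2*(1-2*b) ≤ (1-a)^2*(1-2*a) :=
      mul_le_mul (pow_le_pow_left₀ hb1.le (by linarith) 2) (by linarith)
        hb2.le (by positivity)
    have hden3 : (1-b)^3*(1-2*b) ≤ (1-a)^3*(1-2*a) :=
      mul_le_mul (pow_le_pow_left₀ hb1.le (by linarith) 3) (by linarith)
        hb2.le (by positivity)
    have e1 : 2*a^2*(2-a)/((1-a)*(1-2*a)^2) ≤ 2*b^2*(2-b)/((1-b)*(1-2*b)^2) :=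
      div_le_div₀ (by nlinarith [sq_nonneg b]) hnum1 (mul_pos hb1 (pow_pos hb2 2)) hden1
    have e2 : a^2/((1-a)^2*(1-2*a)) ≤ b^2/((1-b)^2*(1-2*b)) :=
      div_le_div₀ (by positivity) hnum2 (mul_pos (pow_pos hb1 2) hb2) hden2
    have e3 : 2*a^2/((1-a)^3*(1-2*a)) ≤ 2*b^2/((1-b)^3*(1-2*b)) :=
      div_le_div₀ (by positivity) (by linarith) (mul_pos (pow_pos hb1 3) hb2) hden3
    have e4 : a/(1-a) ≤ b/(1-b) :=
      div_le_div₀ hb0 hab hb1 (by linarith)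
    have e5 : a/(1-a)^2 ≤ b/(1-b)^2 :=
      div_le_div₀ hb0 hab (pow_pos hb1 2) (pow_le_pow_left₀ hb1.le (by linarith) 2)
    linarith
  refine ⟨?_, by norm_num [Fcal], hmono, ?_⟩
  · refine ⟨Set.Ioo (-(1/4):ℝ) (1/4), Ioo_mem_nhds (by norm_num) (by norm_num), ?_⟩
    have hc : ContinuousOn (fun r : ℝ => (2*r^2*(2-r)*(1-r)^2 + r^2*(1-r)*(1-2*r) + 2*r^2*(1-2*r)
        + r*(1-r)^2*(1-2*r)^2 + r*(1-r)*(1-2*r)^2) / ((1-r)^3*(1-2*r)^2))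
        (Set.Ioo (-(1/4):ℝ) (1/4)) := by
      apply ContinuousOn.div (by fun_prop) (by fun_prop)
      intro x hx
      obtain ⟨hx1, hx2⟩ := hx
      have h1 : (0:ℝ) < 1 - x := by linarith
      have h2 : (0:ℝ) < 1 - 2*x := by linarith
      exact ne_of_gt (mul_pos (pow_pos h1 3) (pow_pos h2 2))
    apply hc.congr
    intro x hx
    obtain ⟨hx1, hx2⟩ := hx
    exact Fcal_eq_frac x (by linarith) (by linarith)
  · intro r hr
    have h17 : (0.17:ℝ) ∈ Set.Icc (0:ℝ) 0.17 := by norm_num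
    have hle : Fcal r ≤ Fcal 0.17 := hmono hr h17 hr.2
    have h1 : Fcal 0.17 < 1 := by norm_num [Fcal]
    linarith
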